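/- Let q be a real number with q > 1 and let N, m be integers with 0 ≤ N ≤ m. Then Σ_{i=0}^{N} (−1)^{N−i} · q^{(N−i)(N−i−1)/2} · [N choose i]_q · (∏_{j=i+1}^{N} (q^j + 1)) · q^{i(2m+1)} = Σ_{ℓ=0}^{N} (−1)^{ℓ} · q^{(N−ℓ)² + ℓ(ℓ−1)} · [N choose ℓ]_{q²} · ∏_{i=0}^{N−ℓ−1} (q^{2(m−i)} − 1). -/

import Mathlib

/-- The Gaussian binomial coefficient `[n choose k]_q` for a real base `q`. -/
noncomputable def gbinom (q : ℝ) (n k : ℕ) : ℝ :=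
  ∏ j ∈ Finset.Icc 1 k, (q ^ (n - k + j) - 1) / (q ^ j - 1)

namespace StmtAux

open Finset

/-- `∏_{j=1}^n (q^j - 1)`, in range form. -/
noncomputable def hP (q : ℝ) (n : ℕ) : ℝ := ∏ j ∈ Finset.range n, (q ^ (j + 1) - 1)

/-- `∏_{j=1}^n (q^j + 1)`, in range form. -/
noncomputable def gP (q : ℝ) (n : ℕ) : ℝ := ∏ j ∈ Finset.range n, (q ^ (j + 1) + 1)

/-- Extended Gaussian binomial. -/
noncomputable def G (q : ℝ) (n k : ℕ) : ℝ :=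
  if k ≤ n then hP q n / (hP q k * hP q (n - k)) else 0

variable {q : ℝ}

lemma hP_pos (hq : 1 < q) (n : ℕ) : 0 < hP q n := by
  refine Finset.prod_pos fun j _ => ?_
  have : 1 < q ^ (j + 1) := one_lt_pow₀ hq (by omega)
  linarith

lemma hP_ne (hq : 1 < q) (n : ℕ) : hP q n ≠ 0 := (hP_pos hq n).ne'

lemma gP_pos (hq : 1 < q) (n : ℕ) : 0 < gP q n := by
  refine Finset.prod_pos fun j _ => ?_
  have : (0:ℝ) < q ^ (j + 1) := by positivity
  linarith

lemma hP_succ (n : ℕ) : hP q (n + 1) = hP q n * (q ^ (n + 1) - 1) :=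
  Finset.prod_range_succ _ _

lemma gP_succ (n : ℕ) : gP q (n + 1) = gP q n * (q ^ (n + 1) + 1) :=
  Finset.prod_range_succ _ _

@[simp] lemma hP_zero : hP q 0 = 1 := Finset.prod_range_zero _

@[simp] lemma gP_zero : gP q 0 = 1 := Finset.prod_range_zero _

lemma G_zero (hq : 1 < q) (n : ℕ) : G q n 0 = 1 := by
  simp [G, hP_zero, div_self (hP_ne hq n)]

lemma G_self (hq : 1 < q) (n : ℕ) : G q n n = 1 := by
  simp [G, hP_zero, div_self (hP_ne hq n)]

lemma G_of_gt {n k : ℕ} (h : n < k) : G q n k = 0 := by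
  simp [G, Nat.not_le.mpr h]

lemma choose2_succ (a : ℕ) : Nat.choose (a + 1) 2 = Nat.choose a 2 + a := by
  rw [Nat.choose_two_right, Nat.choose_two_right, Nat.triangle_succ]

lemma pow_sub_one_ne (hq : 1 < q) (j : ℕ) (hj : j ≠ 0) : q ^ j - 1 ≠ 0 := by
  have : 1 < q ^ j := one_lt_pow₀ hq hj
  linarith

/-- `gbinom` agrees with `G` for `k ≤ n`. -/
lemma gbinom_eq (hq : 1 < q) {n k : ℕ} (hk : k ≤ n) : gbinom q n k = G q n k := by
  have key : ∀ a b : ℕ, hP q (a + b) = hP q a * ∏ j ∈ Finset.range b, (q ^ (a + j + 1) - 1) := by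
    intro a b
    rw [hP, Finset.prod_range_add]
    rfl
  have hnum : (∏ j ∈ Finset.Icc 1 k, (q ^ (n - k + j) - 1)) * hP q (n - k) = hP q n := by
    have h2 := key (n - k) k
    rw [show n - k + k = n by omega] at h2
    rw [h2, show Finset.Icc 1 k = Finset.Ico 1 (k+1) by rw [Finset.Ico_add_one_right_eq_Icc],
      Finset.prod_Ico_eq_prod_range]
    simp only [Nat.add_sub_cancel]
    rw [mul_comm]
    congr 1
    refine Finset.prod_congr rfl fun j _ => ?_
    congr 2
    omega
  have hden : (∏ j ∈ Finset.Icc 1 k, (q ^ j - 1)) = hP q k := by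
    rw [show Finset.Icc 1 k = Finset.Ico 1 (k+1) by rw [Finset.Ico_add_one_right_eq_Icc],
      Finset.prod_Ico_eq_prod_range]
    simp only [Nat.add_sub_cancel]
    refine Finset.prod_congr rfl fun j _ => ?_
    congr 2
    omega
  rw [gbinom, Finset.prod_div_distrib, hden, G, if_pos hk,
    div_eq_div_iff (hP_ne hq k) (mul_ne_zero (hP_ne hq k) (hP_ne hq (n - k)))]
  linear_combination hP q k * hnum

/-- Pascal recurrence 1: `[n+1, k+1] = [n, k] + q^(k+1)·[n, k+1]`. -/
lemma pascal1 (hq : 1 < q) (n k : ℕ) :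
    G q (n + 1) (k + 1) = G q n k + q ^ (k + 1) * G q n (k + 1) := by
  rcases lt_or_ge n k with h | h
  · rw [G_of_gt (by omega), G_of_gt h, G_of_gt (by omega)]; ring
  rcases eq_or_lt_of_le h with rfl | h
  · rw [G_self hq, G_self hq, G_of_gt (by omega)]; ring
  · -- k < n
    obtain ⟨a, rfl⟩ : ∃ a, n = k + 1 + a := ⟨n - k - 1, by omega⟩
    have e1 : k + 1 + a + 1 - (k + 1) = a + 1 := by omega
    have e2 : k + 1 + a - k = a + 1 := by omega
    have e3 : k + 1 + a - (k + 1) = a := by omega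
    rw [G, G, G, if_pos (by omega), if_pos (by omega), if_pos (by omega), e1, e2, e3]
    rw [show k + 1 + a + 1 = (k + 1 + a) + 1 by ring, hP_succ, hP_succ, hP_succ]
    have h1 := hP_ne hq (k + 1 + a)
    have h2 := hP_ne hq k
    have h3 := hP_ne hq a
    have h4 := pow_sub_one_ne hq (k + 1) (by omega)
    have h5 := pow_sub_one_ne hq (a + 1) (by omega)
    field_simp
    ring

/-- Pascal recurrence 2: `[n+1, k+1] = q^(n-k)·[n, k] + [n, k+1]`. -/
lemma pascal2 (hq : 1 < q) (n k : ℕ) :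
    G q (n + 1) (k + 1) = q ^ (n - k) * G q n k + G q n (k + 1) := by
  rcases lt_or_ge n k with h | h
  · rw [G_of_gt (by omega), G_of_gt h, G_of_gt (by omega)]; ring
  rcases eq_or_lt_of_le h with rfl | h
  · rw [G_self hq, G_self hq, G_of_gt (by omega)]
    simp
  · obtain ⟨a, rfl⟩ : ∃ a, n = k + 1 + a := ⟨n - k - 1, by omega⟩
    have e1 : k + 1 + a + 1 - (k + 1) = a + 1 := by omega
    have e2 : k + 1 + a - k = a + 1 := by omega
    have e3 : k + 1 + a - (k + 1) = a := by omega
    rw [e2, G, G, G, if_pos (by omega), if_pos (by omega), if_pos (by omega), e1, e2, e3]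
    rw [show k + 1 + a + 1 = (k + 1 + a) + 1 by ring, hP_succ, hP_succ, hP_succ]
    have h1 := hP_ne hq (k + 1 + a)
    have h2 := hP_ne hq k
    have h3 := hP_ne hq a
    have h4 := pow_sub_one_ne hq (k + 1) (by omega)
    have h5 := pow_sub_one_ne hq (a + 1) (by omega)
    field_simp
    ring

/-- Subset multiplication: `[n,l]·[n-l,k] = [n,k]·[n-k,l]` for `l + k ≤ n`. -/
lemma G_mul (hq : 1 < q) {n l k : ℕ} (h : l + k ≤ n) :
    G q n l * G q (n - l) k = G q n k * G q (n - k) l := by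
  have e1 : n - l - k = n - k - l := by omega
  rw [G, G, G, G, if_pos (by omega), if_pos (by omega), if_pos (by omega), if_pos (by omega), e1]
  have h1 := hP_ne hq l
  have h2 := hP_ne hq k
  have h3 := hP_ne hq (n - l)
  have h4 := hP_ne hq (n - k)
  have h5 := hP_ne hq (n - k - l)
  field_simp

lemma hP_sq (n : ℕ) : hP (q ^ 2) n = hP q n * gP q n := by
  rw [hP, hP, gP, ← Finset.prod_mul_distrib]
  refine Finset.prod_congr rfl fun j _ => ?_
  rw [← pow_mul, show 2 * (j+1) = (j+1) + (j+1) by ring, pow_add]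
  ring

/-- Relation between the `q²` and `q` Gaussian binomials. -/
lemma G_sq (hq : 1 < q) {n k : ℕ} (hk : k ≤ n) :
    G (q ^ 2) n k * (gP q k * gP q (n - k)) = G q n k * gP q n := by
  rw [G, G, if_pos hk, if_pos hk, hP_sq, hP_sq, hP_sq]
  have h1 := hP_ne hq k
  have h2 := hP_ne hq (n - k)
  have g1 := (gP_pos hq k).ne'
  have g2 := (gP_pos hq (n - k)).ne'
  field_simp

/-- q-binomial theorem. -/
lemma qbinom (hq : 1 < q) (n : ℕ) (x : ℝ) :
    ∏ i ∈ Finset.range n, (x - q ^ i) =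
      ∑ k ∈ Finset.range (n + 1),
        (-1 : ℝ) ^ (n - k) * G q n k * q ^ Nat.choose (n - k) 2 * x ^ k := by
  induction n with
  | zero => simp [G_self hq]
  | succ n ih =>
    have hGn1 : G q n (n + 1) = 0 := G_of_gt (by omega)
    rw [Finset.prod_range_succ, ih]
    rw [Finset.sum_range_succ' (fun k => (-1 : ℝ) ^ (n + 1 - k) * G q (n + 1) k *
      q ^ Nat.choose (n + 1 - k) 2 * x ^ k) (n + 1)]
    rw [mul_sub, Finset.sum_mul, Finset.sum_mul]
    rw [Finset.sum_range_succ' (fun k => (-1 : ℝ) ^ (n - k) * G q n k *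
      q ^ Nat.choose (n - k) 2 * x ^ k * q ^ n) n]
    have hext : ∑ i ∈ Finset.range n, ((-1 : ℝ) ^ (n - (i + 1)) * G q n (i + 1) *
          q ^ Nat.choose (n - (i + 1)) 2 * x ^ (i + 1) * q ^ n)
        = ∑ i ∈ Finset.range (n + 1), ((-1 : ℝ) ^ (n - (i + 1)) * G q n (i + 1) *
          q ^ Nat.choose (n - (i + 1)) 2 * x ^ (i + 1) * q ^ n) := by
      rw [Finset.sum_range_succ, hGn1]
      ring
    rw [hext]
    have hterm : ∀ i ∈ Finset.range (n + 1),
        (-1 : ℝ) ^ (n + 1 - (i + 1)) * G q (n + 1) (i + 1) *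
            q ^ Nat.choose (n + 1 - (i + 1)) 2 * x ^ (i + 1)
        = (-1 : ℝ) ^ (n - i) * G q n i * q ^ Nat.choose (n - i) 2 * x ^ i * x
          - (-1 : ℝ) ^ (n - (i + 1)) * G q n (i + 1) *
            q ^ Nat.choose (n - (i + 1)) 2 * x ^ (i + 1) * q ^ n := by
      intro i hi
      have hi' : i ≤ n := by simpa using Nat.lt_succ_iff.mp (Finset.mem_range.mp hi)
      rcases eq_or_lt_of_le hi' with rfl | hlt
      · simp only [Nat.add_sub_cancel, Nat.sub_self, show i + 1 - (i + 1) = 0 by omega,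
          show i - (i + 1) = 0 by omega, hGn1, G_self hq]
        ring
      · obtain ⟨a, rfl⟩ : ∃ a, n = i + 1 + a := ⟨n - i - 1, by omega⟩
        have e1 : i + 1 + a + 1 - (i + 1) = a + 1 := by omega
        have e2 : i + 1 + a - i = a + 1 := by omega
        have e3 : i + 1 + a - (i + 1) = a := by omega
        rw [e1, e2, e3, pascal1 hq]
        rw [choose2_succ]
        ring
    rw [Finset.sum_congr rfl hterm, Finset.sum_sub_distrib]
    have hconst : (-1 : ℝ) ^ (n + 1 - 0) * G q (n + 1) 0 * q ^ Nat.choose (n + 1 - 0) 2 * x ^ 0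
        = -((-1 : ℝ) ^ (n - 0) * G q n 0 * q ^ Nat.choose (n - 0) 2 * x ^ 0 * q ^ n) := by
      simp only [Nat.sub_zero, G_zero hq]
      rw [choose2_succ]
      rw [pow_succ, pow_add]
      ring
    rw [hconst]
    ring

lemma hq2 (hq : 1 < q) : 1 < q ^ 2 := by nlinarith

lemma two_choose_add (a : ℕ) : a ^ 2 = a + 2 * Nat.choose a 2 := by
  induction a with
  | zero => rfl
  | succ b ih =>
    have h : (b + 1) ^ 2 = b ^ 2 + 2 * b + 1 := by ring
    have h2 := choose2_succ b
    omega

/-- The sum `S_M = Σ_l q^(l(l-1)+(M-l)²) [M,l]_{q²}`. -/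
noncomputable def Ssum (q : ℝ) (M : ℕ) : ℝ :=
  ∑ l ∈ Finset.range (M + 1), q ^ (l * (l - 1) + (M - l) ^ 2) * G (q ^ 2) M l

/-- The companion sum `B_M = Σ_l q^(l(l+1)+(M-l)²) [M,l]_{q²}`. -/
noncomputable def Bsum (q : ℝ) (M : ℕ) : ℝ :=
  ∑ l ∈ Finset.range (M + 1), q ^ (l * (l + 1) + (M - l) ^ 2) * G (q ^ 2) M l

lemma S_succ (hq : 1 < q) (M : ℕ) :
    Ssum q (M + 1) = Bsum q M + q ^ (2 * M + 1) * Ssum q M := by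
  have hQ : 1 < q ^ 2 := hq2 hq
  rw [Ssum, Finset.sum_range_succ' (fun l => q ^ (l * (l - 1) + (M + 1 - l) ^ 2) *
    G (q ^ 2) (M + 1) l) (M + 1)]
  have h1 : ∀ i ∈ Finset.range (M + 1),
      q ^ ((i + 1) * (i + 1 - 1) + (M + 1 - (i + 1)) ^ 2) * G (q ^ 2) (M + 1) (i + 1)
      = q ^ ((i + 1) * i + (M - i) ^ 2) * G (q ^ 2) M i
        + q ^ ((i + 1) * i + (M - i) ^ 2) * (q ^ 2) ^ (i + 1) * G (q ^ 2) M (i + 1) := by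
    intro i _
    rw [pascal1 hQ, show i + 1 - 1 = i by omega, show M + 1 - (i + 1) = M - i by omega]
    ring
  rw [Finset.sum_congr rfl h1, Finset.sum_add_distrib]
  have h2 : ∑ i ∈ Finset.range (M + 1), q ^ ((i + 1) * i + (M - i) ^ 2) * G (q ^ 2) M i
      = Bsum q M := by
    refine Finset.sum_congr rfl fun i _ => ?_
    rw [Nat.mul_comm (i + 1) i]
  have h3 : (∑ i ∈ Finset.range (M + 1),
        q ^ ((i + 1) * i + (M - i) ^ 2) * (q ^ 2) ^ (i + 1) * G (q ^ 2) M (i + 1))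
        + q ^ (0 * (0 - 1) + (M + 1 - 0) ^ 2) * G (q ^ 2) (M + 1) 0
      = q ^ (2 * M + 1) * Ssum q M := by
    rw [Ssum, Finset.sum_range_succ' (fun l => q ^ (l * (l - 1) + (M - l) ^ 2) *
      G (q ^ 2) M l) M, Finset.sum_range_succ (fun i =>
      q ^ ((i + 1) * i + (M - i) ^ 2) * (q ^ 2) ^ (i + 1) * G (q ^ 2) M (i + 1))]
    rw [G_of_gt (by omega), mul_add (q ^ (2 * M + 1)), Finset.mul_sum]
    have h4 : ∀ i ∈ Finset.range M,
        q ^ ((i + 1) * i + (M - i) ^ 2) * (q ^ 2) ^ (i + 1) * G (q ^ 2) M (i + 1)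
        = q ^ (2 * M + 1) * (q ^ ((i + 1) * (i + 1 - 1) + (M - (i + 1)) ^ 2) *
          G (q ^ 2) M (i + 1)) := by
      intro i hi
      have hi' : i < M := Finset.mem_range.mp hi
      obtain ⟨a, rfl⟩ : ∃ a, M = i + 1 + a := ⟨M - i - 1, by omega⟩
      rw [show i + 1 + a - i = a + 1 by omega, show i + 1 + a - (i + 1) = a by omega,
        show i + 1 - 1 = i by omega]
      ring
    rw [Finset.sum_congr rfl h4]
    rw [G_zero hQ, G_zero hQ]
    rw [show (0 : ℕ) * (0 - 1) + (M + 1 - 0) ^ 2 = (M + 1) ^ 2 by simp,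
      show (0 : ℕ) * (0 - 1) + (M - 0) ^ 2 = M ^ 2 by simp,
      show (M + 1) ^ 2 = (2 * M + 1) + M ^ 2 by ring]
    ring
  rw [h2, ← h3]
  ring

lemma B_succ (hq : 1 < q) (M : ℕ) :
    Bsum q (M + 1) = q ^ (2 * M + 2) * Bsum q M + q ^ (2 * M + 1) * Ssum q M := by
  have hQ : 1 < q ^ 2 := hq2 hq
  rw [Bsum, Finset.sum_range_succ' (fun l => q ^ (l * (l + 1) + (M + 1 - l) ^ 2) *
    G (q ^ 2) (M + 1) l) (M + 1)]
  have h1 : ∀ i ∈ Finset.range (M + 1),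
      q ^ ((i + 1) * (i + 1 + 1) + (M + 1 - (i + 1)) ^ 2) * G (q ^ 2) (M + 1) (i + 1)
      = q ^ ((i + 1) * (i + 2) + (M - i) ^ 2) * (q ^ 2) ^ (M - i) * G (q ^ 2) M i
        + q ^ ((i + 1) * (i + 2) + (M - i) ^ 2) * G (q ^ 2) M (i + 1) := by
    intro i _
    rw [pascal2 hQ, show M + 1 - (i + 1) = M - i by omega, show i + 1 + 1 = i + 2 by omega]
    ring
  rw [Finset.sum_congr rfl h1, Finset.sum_add_distrib]
  have h2 : ∑ i ∈ Finset.range (M + 1),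
      q ^ ((i + 1) * (i + 2) + (M - i) ^ 2) * (q ^ 2) ^ (M - i) * G (q ^ 2) M i
      = q ^ (2 * M + 2) * Bsum q M := by
    rw [Bsum, Finset.mul_sum]
    refine Finset.sum_congr rfl fun i hi => ?_
    have hi' : i ≤ M := by have := Finset.mem_range.mp hi; omega
    obtain ⟨a, rfl⟩ : ∃ a, M = i + a := ⟨M - i, by omega⟩
    rw [show i + a - i = a by omega]
    ring
  have h3 : (∑ i ∈ Finset.range (M + 1),
        q ^ ((i + 1) * (i + 2) + (M - i) ^ 2) * G (q ^ 2) M (i + 1))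
        + q ^ (0 * (0 + 1) + (M + 1 - 0) ^ 2) * G (q ^ 2) (M + 1) 0
      = q ^ (2 * M + 1) * Ssum q M := by
    rw [Ssum, Finset.sum_range_succ' (fun l => q ^ (l * (l - 1) + (M - l) ^ 2) *
      G (q ^ 2) M l) M, Finset.sum_range_succ (fun i =>
      q ^ ((i + 1) * (i + 2) + (M - i) ^ 2) * G (q ^ 2) M (i + 1))]
    rw [G_of_gt (by omega), mul_add (q ^ (2 * M + 1)), Finset.mul_sum]
    have h4 : ∀ i ∈ Finset.range M,
        q ^ ((i + 1) * (i + 2) + (M - i) ^ 2) * G (q ^ 2) M (i + 1)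
        = q ^ (2 * M + 1) * (q ^ ((i + 1) * (i + 1 - 1) + (M - (i + 1)) ^ 2) *
          G (q ^ 2) M (i + 1)) := by
      intro i hi
      have hi' : i < M := Finset.mem_range.mp hi
      obtain ⟨a, rfl⟩ : ∃ a, M = i + 1 + a := ⟨M - i - 1, by omega⟩
      rw [show i + 1 + a - i = a + 1 by omega, show i + 1 + a - (i + 1) = a by omega,
        show i + 1 - 1 = i by omega]
      ring
    rw [Finset.sum_congr rfl h4]
    rw [G_zero hQ, G_zero hQ]
    rw [show (0 : ℕ) * (0 + 1) + (M + 1 - 0) ^ 2 = (M + 1) ^ 2 by simp,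
      show (0 : ℕ) * (0 - 1) + (M - 0) ^ 2 = M ^ 2 by simp,
      show (M + 1) ^ 2 = (2 * M + 1) + M ^ 2 by ring]
    ring
  rw [h2, ← h3]
  ring

/-- Closed forms for `Ssum` and `Bsum`. -/
lemma SB (hq : 1 < q) (M : ℕ) :
    Ssum q M = q ^ Nat.choose M 2 * gP q M ∧
    Bsum q M = q ^ Nat.choose (M + 1) 2 * gP q M := by
  induction M with
  | zero =>
    constructor <;> simp [Ssum, Bsum, G_zero (hq2 hq)]
  | succ M ih =>
    constructor
    · rw [S_succ hq, ih.1, ih.2, gP_succ]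
      simp only [choose2_succ]
      ring
    · rw [B_succ hq, ih.1, ih.2, gP_succ]
      simp only [choose2_succ]
      ring

/-- Expansion of the product `∏ (q^(2(m-i)) - 1)` via the q-binomial theorem. -/
lemma expand (hq : 1 < q) {n m : ℕ} (hnm : n ≤ m) :
    (q ^ 2) ^ Nat.choose n 2 * ∏ i ∈ Finset.range n, (q ^ (2 * (m - i)) - 1)
      = ∑ k ∈ Finset.range (n + 1), (-1 : ℝ) ^ (n - k) * G (q ^ 2) n k *
          (q ^ 2) ^ Nat.choose (n - k) 2 * ((q ^ 2) ^ m) ^ k := by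
  have hQ := hq2 hq
  rw [← qbinom hQ n ((q ^ 2) ^ m)]
  have hgauss : (((q : ℝ) ^ 2) ^ Nat.choose n 2) = ∏ i ∈ Finset.range n, (q ^ 2) ^ i := by
    rw [Finset.prod_pow_eq_pow_sum]
    congr 1
    rw [Nat.choose_two_right, ← Finset.sum_range_id_mul_two n, Nat.mul_div_cancel _ zero_lt_two]
  rw [hgauss, ← Finset.prod_mul_distrib]
  refine Finset.prod_congr rfl fun i hi => ?_
  have him : i ≤ m := by have := Finset.mem_range.mp hi; omega
  have hkey : ((q : ℝ) ^ 2) ^ i * q ^ (2 * (m - i)) = ((q ^ 2) ^ m) := by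
    rw [← pow_mul, ← pow_mul, ← pow_add]
    congr 1
    omega
  rw [mul_sub, mul_one, hkey]

lemma gP_Ioc (n : ℕ) : gP q n = ∏ j ∈ Finset.Ioc 0 n, (q ^ j + 1) := by
  rw [gP, ← Finset.Icc_add_one_left_eq_Ioc, zero_add, show Finset.Icc 1 n = Finset.Ico 1 (n + 1) by
    rw [Finset.Ico_add_one_right_eq_Icc], Finset.prod_Ico_eq_prod_range]
  simp only [Nat.add_sub_cancel]
  refine Finset.prod_congr rfl fun j _ => ?_
  congr 2
  omega

end StmtAux

open StmtAux in
theorem stmt3 (q : ℝ) (hq : 1 < q) (N m : ℕ) (hNm : N ≤ m) :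
    ∑ i ∈ Finset.range (N + 1),
      (-1 : ℝ) ^ (N - i) * q ^ ((N - i) * (N - i - 1) / 2) * gbinom q N i *
        (∏ j ∈ Finset.Icc (i + 1) N, (q ^ j + 1)) * q ^ (i * (2 * m + 1)) =
    ∑ ℓ ∈ Finset.range (N + 1),
      (-1 : ℝ) ^ ℓ * q ^ ((N - ℓ) ^ 2 + ℓ * (ℓ - 1)) * gbinom (q ^ 2) N ℓ *
        ∏ i ∈ Finset.range (N - ℓ), (q ^ (2 * (m - i)) - 1) := by
  have hQ : (1 : ℝ) < q ^ 2 := hq2 hq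
  symm
  calc ∑ ℓ ∈ Finset.range (N + 1),
      (-1 : ℝ) ^ ℓ * q ^ ((N - ℓ) ^ 2 + ℓ * (ℓ - 1)) * gbinom (q ^ 2) N ℓ *
        ∏ i ∈ Finset.range (N - ℓ), (q ^ (2 * (m - i)) - 1)
      = ∑ ℓ ∈ Finset.range (N + 1), ∑ k ∈ Finset.range (N + 1),
          ((-1 : ℝ) ^ ℓ * q ^ ((N - ℓ) + ℓ * (ℓ - 1)) * G (q ^ 2) N ℓ *
            ((-1 : ℝ) ^ (N - ℓ - k) * G (q ^ 2) (N - ℓ) k *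
              (q ^ 2) ^ Nat.choose (N - ℓ - k) 2 * ((q ^ 2) ^ m) ^ k)) := by
        refine Finset.sum_congr rfl fun ℓ hℓ => ?_
        have hℓ' : ℓ ≤ N := by have := Finset.mem_range.mp hℓ; omega
        have hexp := expand hq (show N - ℓ ≤ m by omega)
        have hsub : (∑ k ∈ Finset.range (N - ℓ + 1), (-1 : ℝ) ^ (N - ℓ - k) *
              G (q ^ 2) (N - ℓ) k * (q ^ 2) ^ Nat.choose (N - ℓ - k) 2 * ((q ^ 2) ^ m) ^ k)
            = ∑ k ∈ Finset.range (N + 1), (-1 : ℝ) ^ (N - ℓ - k) *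
              G (q ^ 2) (N - ℓ) k * (q ^ 2) ^ Nat.choose (N - ℓ - k) 2 * ((q ^ 2) ^ m) ^ k := by
          refine Finset.sum_subset (Finset.range_subset_range.mpr (by omega)) fun x hx hx' => ?_
          simp only [Finset.mem_range] at hx hx'
          rw [G_of_gt (by omega)]
          ring
        rw [gbinom_eq hQ hℓ', two_choose_add (N - ℓ),
          show N - ℓ + 2 * Nat.choose (N - ℓ) 2 + ℓ * (ℓ - 1)
            = ((N - ℓ) + ℓ * (ℓ - 1)) + 2 * Nat.choose (N - ℓ) 2 by ring,
          pow_add, pow_mul]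
        calc (-1 : ℝ) ^ ℓ * (q ^ (N - ℓ + ℓ * (ℓ - 1)) * (q ^ 2) ^ Nat.choose (N - ℓ) 2) *
              G (q ^ 2) N ℓ * ∏ i ∈ Finset.range (N - ℓ), (q ^ (2 * (m - i)) - 1)
            = ((-1 : ℝ) ^ ℓ * q ^ (N - ℓ + ℓ * (ℓ - 1)) * G (q ^ 2) N ℓ) *
              ((q ^ 2) ^ Nat.choose (N - ℓ) 2 *
                ∏ i ∈ Finset.range (N - ℓ), (q ^ (2 * (m - i)) - 1)) := by ring
          _ = _ := by
              rw [hexp, hsub, Finset.mul_sum]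
    _ = ∑ k ∈ Finset.range (N + 1), ∑ ℓ ∈ Finset.range (N + 1),
          ((-1 : ℝ) ^ ℓ * q ^ ((N - ℓ) + ℓ * (ℓ - 1)) * G (q ^ 2) N ℓ *
            ((-1 : ℝ) ^ (N - ℓ - k) * G (q ^ 2) (N - ℓ) k *
              (q ^ 2) ^ Nat.choose (N - ℓ - k) 2 * ((q ^ 2) ^ m) ^ k)) := Finset.sum_comm
    _ = ∑ k ∈ Finset.range (N + 1),
          (-1 : ℝ) ^ (N - k) * q ^ ((N - k) * (N - k - 1) / 2) * gbinom q N k *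
            (∏ j ∈ Finset.Icc (k + 1) N, (q ^ j + 1)) * q ^ (k * (2 * m + 1)) := by
        refine Finset.sum_congr rfl fun k hk => ?_
        have hk' : k ≤ N := by have := Finset.mem_range.mp hk; omega
        have hrestrict : (∑ ℓ ∈ Finset.range (N + 1),
              ((-1 : ℝ) ^ ℓ * q ^ ((N - ℓ) + ℓ * (ℓ - 1)) * G (q ^ 2) N ℓ *
                ((-1 : ℝ) ^ (N - ℓ - k) * G (q ^ 2) (N - ℓ) k *
                  (q ^ 2) ^ Nat.choose (N - ℓ - k) 2 * ((q ^ 2) ^ m) ^ k)))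
            = ∑ ℓ ∈ Finset.range (N - k + 1),
              ((-1 : ℝ) ^ ℓ * q ^ ((N - ℓ) + ℓ * (ℓ - 1)) * G (q ^ 2) N ℓ *
                ((-1 : ℝ) ^ (N - ℓ - k) * G (q ^ 2) (N - ℓ) k *
                  (q ^ 2) ^ Nat.choose (N - ℓ - k) 2 * ((q ^ 2) ^ m) ^ k)) := by
          refine (Finset.sum_subset (Finset.range_subset_range.mpr (by omega)) fun x hx hx' => ?_).symm
          simp only [Finset.mem_range] at hx hx'
          rw [G_of_gt (show N - x < k by omega)]
          ring
        rw [hrestrict]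
        have hterm : ∀ ℓ ∈ Finset.range (N - k + 1),
            ((-1 : ℝ) ^ ℓ * q ^ ((N - ℓ) + ℓ * (ℓ - 1)) * G (q ^ 2) N ℓ *
              ((-1 : ℝ) ^ (N - ℓ - k) * G (q ^ 2) (N - ℓ) k *
                (q ^ 2) ^ Nat.choose (N - ℓ - k) 2 * ((q ^ 2) ^ m) ^ k))
            = ((-1 : ℝ) ^ (N - k) * ((q ^ 2) ^ m) ^ k * q ^ k * G (q ^ 2) N k) *
              (q ^ (ℓ * (ℓ - 1) + (N - k - ℓ) ^ 2) * G (q ^ 2) (N - k) ℓ) := by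
          intro ℓ hℓ
          have hℓ' : ℓ ≤ N - k := by have := Finset.mem_range.mp hℓ; omega
          have hsgn : (-1 : ℝ) ^ ℓ * (-1 : ℝ) ^ (N - ℓ - k) = (-1 : ℝ) ^ (N - k) := by
            rw [← pow_add]
            congr 1
            omega
          have hG := G_mul hQ (show ℓ + k ≤ N by omega)
          have hpow : q ^ ((N - ℓ) + ℓ * (ℓ - 1)) * ((q : ℝ) ^ 2) ^ Nat.choose (N - ℓ - k) 2
              = q ^ k * q ^ (ℓ * (ℓ - 1) + (N - k - ℓ) ^ 2) := by
            rw [show N - ℓ - k = N - k - ℓ by omega, ← pow_mul, ← pow_add, ← pow_add]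
            congr 1
            rw [two_choose_add (N - k - ℓ)]
            have e1 : N - ℓ = k + (N - k - ℓ) := by omega
            generalize ℓ * (ℓ - 1) = A
            generalize Nat.choose (N - k - ℓ) 2 = C
            omega
          calc (-1 : ℝ) ^ ℓ * q ^ ((N - ℓ) + ℓ * (ℓ - 1)) * G (q ^ 2) N ℓ *
                ((-1 : ℝ) ^ (N - ℓ - k) * G (q ^ 2) (N - ℓ) k *
                  (q ^ 2) ^ Nat.choose (N - ℓ - k) 2 * ((q ^ 2) ^ m) ^ k)
              = ((-1 : ℝ) ^ ℓ * (-1 : ℝ) ^ (N - ℓ - k)) *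
                (q ^ ((N - ℓ) + ℓ * (ℓ - 1)) * ((q : ℝ) ^ 2) ^ Nat.choose (N - ℓ - k) 2) *
                (G (q ^ 2) N ℓ * G (q ^ 2) (N - ℓ) k) * ((q ^ 2) ^ m) ^ k := by ring
            _ = ((-1 : ℝ) ^ (N - k)) * (q ^ k * q ^ (ℓ * (ℓ - 1) + (N - k - ℓ) ^ 2)) *
                (G (q ^ 2) N k * G (q ^ 2) (N - k) ℓ) * ((q ^ 2) ^ m) ^ k := by
                rw [hsgn, hpow, hG]
            _ = _ := by ring
        rw [Finset.sum_congr rfl hterm, ← Finset.mul_sum]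
        have hS : (∑ ℓ ∈ Finset.range (N - k + 1),
              q ^ (ℓ * (ℓ - 1) + (N - k - ℓ) ^ 2) * G (q ^ 2) (N - k) ℓ)
            = q ^ Nat.choose (N - k) 2 * gP q (N - k) := (SB hq (N - k)).1
        rw [hS]
        -- final closed-form comparison
        have hgb : gbinom q N k = G q N k := gbinom_eq hq hk'
        have hch : (N - k) * (N - k - 1) / 2 = Nat.choose (N - k) 2 :=
          (Nat.choose_two_right _).symm
        have hkm : (q : ℝ) ^ (k * (2 * m + 1)) = ((q ^ 2) ^ m) ^ k * q ^ k := by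
          rw [← pow_mul, ← pow_mul, ← pow_add]
          congr 1
          ring
        have hprod : gP q k * ∏ j ∈ Finset.Icc (k + 1) N, (q ^ j + 1) = gP q N := by
          rw [gP_Ioc, gP_Ioc, show Finset.Icc (k + 1) N = Finset.Ioc k N from
            Finset.Icc_add_one_left_eq_Ioc k N]
          exact Finset.prod_Ioc_consecutive _ (Nat.zero_le k) hk'
        have hkey := G_sq hq hk'
        rw [hgb, hch, hkm]
        apply mul_left_cancel₀ (gP_pos hq k).ne'
        linear_combination ((-1 : ℝ) ^ (N - k) * ((q ^ 2) ^ m) ^ k * q ^ k *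
            q ^ Nat.choose (N - k) 2) * hkey
          - ((-1 : ℝ) ^ (N - k) * q ^ Nat.choose (N - k) 2 * G q N k *
            ((q ^ 2) ^ m) ^ k * q ^ k) * hprod
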